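/- Let G = ⟨a, b | a²b⁻²ab⁻²a²ba²baba²b = 1⟩, let μ = b⁻²ab⁻²ab⁻¹ and λ = a⁻²b⁻¹a⁻²b. For any homomorphism ρ from G to the group of orientation-preserving homeomorphisms of ℝ, if s ∈ ℝ is a fixed point of ρ(μ), then s is a fixed point of ρ(g) for every g ∈ G. -/

import Mathlib

/-- The relator `a²b⁻²ab⁻²a²ba²baba²b` in the free group on two generators. -/
def v2503Rel : FreeGroup (Fin 2) :=
  let a : FreeGroup (Fin 2) := FreeGroup.of 0
  let b : FreeGroup (Fin 2) := FreeGroup.of 1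
  a ^ 2 * b⁻¹ ^ 2 * a * b⁻¹ ^ 2 * a ^ 2 * b * a ^ 2 * b * a * b * a ^ 2 * b

/-- The fundamental group of v2503: `⟨a, b | a²b⁻²ab⁻²a²ba²baba²b = 1⟩`. -/
abbrev V2503 : Type := PresentedGroup ({v2503Rel} : Set (FreeGroup (Fin 2)))

/-- The generator `a`. -/
def va : V2503 := PresentedGroup.of 0

/-- The generator `b`. -/
def vb : V2503 := PresentedGroup.of 1

/-- The meridian `μ = b⁻²ab⁻²ab⁻¹`. -/
def vmu : V2503 := vb⁻¹ ^ 2 * va * vb⁻¹ ^ 2 * va * vb⁻¹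

/-- The longitude `λ = a⁻²b⁻¹a⁻²b`. -/
def vlam : V2503 := va⁻¹ ^ 2 * vb⁻¹ * va⁻¹ ^ 2 * vb

theorem v2503_rel_eq_one :
    (va ^ 2 * vb⁻¹ ^ 2 * va * vb⁻¹ ^ 2 * va ^ 2 * vb * va ^ 2 * vb * va * vb * va ^ 2 * vb : V2503) = 1 := by
  have h : (PresentedGroup.mk _ v2503Rel : V2503) = 1 :=
    (QuotientGroup.eq_one_iff _).2 (Subgroup.subset_normalClosure rfl)
  rw [show (va ^ 2 * vb⁻¹ ^ 2 * va * vb⁻¹ ^ 2 * va ^ 2 * vb * va ^ 2 * vb * va * vb * va ^ 2 * vb : V2503)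
      = PresentedGroup.mk _ v2503Rel by
    simp [va, vb, v2503Rel, PresentedGroup.of, map_mul, map_pow, map_inv]; rfl]
  exact h

theorem v2503_mu_inv_positive :
    (vmu⁻¹ : V2503) = vb * va * vb * va * va * vb * va * vb * va * va * vb * va * va := by
  have e : (vmu⁻¹ : V2503) = (vb * va * vb * va * va * vb * va * vb * va * va * vb * va * va)
      * va⁻¹ ^ 2 *
      (va ^ 2 * vb⁻¹ ^ 2 * va * vb⁻¹ ^ 2 * va ^ 2 * vb * va ^ 2 * vb * va * vb * va ^ 2 * vb)⁻¹
      * va ^ 2 := by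
    unfold vmu; group
  rw [e, v2503_rel_eq_one]; group; simp [sq, zpow_two, mul_assoc]

/-- any fixed point of `ρ(μ)` is a global fixed point of the `ρ`-action
of `π₁(v2503)` on `ℝ` by orientation-preserving homeomorphisms. -/
theorem v2503_meridian_fixed_point_is_global
    (ρ : V2503 →* (ℝ ≃o ℝ)) (s : ℝ) (hs : ρ vmu s = s) :
    ∀ g : V2503, ρ g s = s := by
  have hmul : ∀ (f g : ℝ ≃o ℝ) (x : ℝ), (f * g) x = f (g x) := fun _ _ _ => rfl
  have hinv : ∀ (f : ℝ ≃o ℝ) (x : ℝ), (f⁻¹ : ℝ ≃o ℝ) x = f.symm x := fun _ _ => rfl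
  -- the fixed point equation for μ, in applied form
  have hmu : (ρ vb).symm ((ρ vb).symm ((ρ va) ((ρ vb).symm ((ρ vb).symm
      ((ρ va) ((ρ vb).symm s)))))) = s := by
    have h := hs
    rw [show vmu = vb⁻¹ ^ 2 * va * vb⁻¹ ^ 2 * va * vb⁻¹ from rfl] at h
    simp only [map_mul, map_pow, map_inv, pow_two, hmul, hinv] at h
    exact h
  -- the fixed point equation for μ⁻¹ = positive word W
  have hsW : (ρ vb) ((ρ va) ((ρ vb) ((ρ va) ((ρ va) ((ρ vb) ((ρ va) ((ρ vb) ((ρ va)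
      ((ρ va) ((ρ vb) ((ρ va) ((ρ va) s)))))))))))) = s := by
    have h : ρ vmu⁻¹ s = s := by
      rw [map_inv, hinv]
      conv_lhs => rw [← hs]
      exact (ρ vmu).symm_apply_apply s
    rw [v2503_mu_inv_positive] at h
    simp only [map_mul, hmul] at h
    exact h
  -- step lemmas
  have stepL : ∀ (f : ℝ ≃o ℝ), s ≤ f s → ∀ {x : ℝ}, s ≤ x → s ≤ f x :=
    fun f h x hx => h.trans (f.monotone hx)
  have stepLs : ∀ (f : ℝ ≃o ℝ), s ≤ f s → ∀ {x : ℝ}, s < x → s < f x :=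
    fun f h x hx => h.trans_lt (f.strictMono hx)
  have stepLs' : ∀ (f : ℝ ≃o ℝ), s < f s → ∀ {x : ℝ}, s ≤ x → s < f x :=
    fun f h x hx => h.trans_le (f.monotone hx)
  have stepG : ∀ (f : ℝ ≃o ℝ), f s ≤ s → ∀ {x : ℝ}, x ≤ s → f x ≤ s :=
    fun f h x hx => (f.monotone hx).trans h
  have stepGs : ∀ (f : ℝ ≃o ℝ), f s ≤ s → ∀ {x : ℝ}, x < s → f x < s :=
    fun f h x hx => (f.strictMono hx).trans_le h
  have stepGs' : ∀ (f : ℝ ≃o ℝ), f s < s → ∀ {x : ℝ}, x ≤ s → f x < s :=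
    fun f h x hx => (f.monotone hx).trans_lt h
  have symmLe : ∀ (f : ℝ ≃o ℝ), f s ≤ s → s ≤ f.symm s := fun f h => by
    have := f.symm.monotone h
    rwa [f.symm_apply_apply] at this
  have symmLt : ∀ (f : ℝ ≃o ℝ), f s < s → s < f.symm s := fun f h => by
    have := f.symm.strictMono h
    rwa [f.symm_apply_apply] at this
  have symmGe : ∀ (f : ℝ ≃o ℝ), s ≤ f s → f.symm s ≤ s := fun f h => by
    have := f.symm.monotone h
    rwa [f.symm_apply_apply] at this
  have symmGt : ∀ (f : ℝ ≃o ℝ), s < f s → f.symm s < s := fun f h => by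
    have := f.symm.strictMono h
    rwa [f.symm_apply_apply] at this
  -- contradiction blocks
  -- P : s ≤ (ρ va) s, (ρ vb) s ≤ s, one strict  ⟹  μ-word at s is > s : contra
  have blockP : ¬ (s ≤ (ρ va) s ∧ (ρ vb) s ≤ s ∧ (s < (ρ va) s ∨ (ρ vb) s < s)) := by
    rintro ⟨hale, hble, hstrict⟩
    have hBi : s ≤ (ρ vb).symm s := symmLe _ hble
    rcases hstrict with ha | hb
    · have c1 := hBi
      have c2 := stepLs' (ρ va) ha c1
      have c3 := stepLs (ρ vb).symm hBi c2
      have c4 := stepLs (ρ vb).symm hBi c3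
      have c5 := stepLs (ρ va) hale c4
      have c6 := stepLs (ρ vb).symm hBi c5
      have c7 := stepLs (ρ vb).symm hBi c6
      exact c7.ne' hmu
    · have hBi' : s < (ρ vb).symm s := symmLt _ hb
      have c2 := stepLs (ρ va) hale hBi'
      have c3 := stepLs (ρ vb).symm hBi c2
      have c4 := stepLs (ρ vb).symm hBi c3
      have c5 := stepLs (ρ va) hale c4
      have c6 := stepLs (ρ vb).symm hBi c5
      have c7 := stepLs (ρ vb).symm hBi c6
      exact c7.ne' hmu
  -- N : (ρ va) s ≤ s, s ≤ (ρ vb) s, one strict  ⟹  μ-word at s is < s : contra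
  have blockN : ¬ ((ρ va) s ≤ s ∧ s ≤ (ρ vb) s ∧ ((ρ va) s < s ∨ s < (ρ vb) s)) := by
    rintro ⟨hale, hble, hstrict⟩
    have hBi : (ρ vb).symm s ≤ s := symmGe _ hble
    rcases hstrict with ha | hb
    · have c2 := stepGs' (ρ va) ha hBi
      have c3 := stepGs (ρ vb).symm hBi c2
      have c4 := stepGs (ρ vb).symm hBi c3
      have c5 := stepGs (ρ va) hale c4
      have c6 := stepGs (ρ vb).symm hBi c5
      have c7 := stepGs (ρ vb).symm hBi c6
      exact c7.ne hmu
    · have hBi' : (ρ vb).symm s < s := symmGt _ hb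
      have c2 := stepGs (ρ va) hale hBi'
      have c3 := stepGs (ρ vb).symm hBi c2
      have c4 := stepGs (ρ vb).symm hBi c3
      have c5 := stepGs (ρ va) hale c4
      have c6 := stepGs (ρ vb).symm hBi c5
      have c7 := stepGs (ρ vb).symm hBi c6
      exact c7.ne hmu
  -- W blocks: both strictly positive or both strictly negative
  have blockPP : ¬ (s < (ρ va) s ∧ s < (ρ vb) s) := by
    rintro ⟨ha, hb⟩
    have c1 := ha
    have c2 := stepLs (ρ va) ha.le c1
    have c3 := stepLs (ρ vb) hb.le c2
    have c4 := stepLs (ρ va) ha.le c3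
    have c5 := stepLs (ρ va) ha.le c4
    have c6 := stepLs (ρ vb) hb.le c5
    have c7 := stepLs (ρ va) ha.le c6
    have c8 := stepLs (ρ vb) hb.le c7
    have c9 := stepLs (ρ va) ha.le c8
    have c10 := stepLs (ρ va) ha.le c9
    have c11 := stepLs (ρ vb) hb.le c10
    have c12 := stepLs (ρ va) ha.le c11
    have c13 := stepLs (ρ vb) hb.le c12
    exact c13.ne' hsW
  have blockNN : ¬ ((ρ va) s < s ∧ (ρ vb) s < s) := by
    rintro ⟨ha, hb⟩
    have c1 := ha
    have c2 := stepGs (ρ va) ha.le c1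
    have c3 := stepGs (ρ vb) hb.le c2
    have c4 := stepGs (ρ va) ha.le c3
    have c5 := stepGs (ρ va) ha.le c4
    have c6 := stepGs (ρ vb) hb.le c5
    have c7 := stepGs (ρ va) ha.le c6
    have c8 := stepGs (ρ vb) hb.le c7
    have c9 := stepGs (ρ va) ha.le c8
    have c10 := stepGs (ρ va) ha.le c9
    have c11 := stepGs (ρ vb) hb.le c10
    have c12 := stepGs (ρ va) ha.le c11
    have c13 := stepGs (ρ vb) hb.le c12
    exact c13.ne hsW
  -- deduce both generators fix s
  have hfix : (ρ va) s = s ∧ (ρ vb) s = s := by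
    rcases lt_trichotomy ((ρ va) s) s with ha | ha | ha <;>
      rcases lt_trichotomy ((ρ vb) s) s with hb | hb | hb
    · exact absurd ⟨ha, hb⟩ blockNN
    · exact absurd ⟨ha.le, hb.ge, Or.inl ha⟩ blockN
    · exact absurd ⟨ha.le, hb.le, Or.inr hb⟩ blockN
    · exact absurd ⟨ha.ge, hb.le, Or.inr hb⟩ blockP
    · exact ⟨ha, hb⟩
    · exact absurd ⟨ha.le, hb.le, Or.inr hb⟩ blockN
    · exact absurd ⟨ha.le, hb.le, Or.inl ha⟩ blockP
    · exact absurd ⟨ha.le, hb.le, Or.inl ha⟩ blockP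
    · exact absurd ⟨ha, hb⟩ blockPP
  -- the stabilizer subgroup
  let H : Subgroup V2503 :=
    { carrier := {g : V2503 | ρ g s = s}
      one_mem' := by simp
      mul_mem' := by
        intro x y hx hy
        simp only [Set.mem_setOf_eq] at *
        rw [map_mul, hmul, hy, hx]
      inv_mem' := by
        intro x hx
        simp only [Set.mem_setOf_eq] at *
        rw [map_inv, hinv]
        conv_lhs => rw [← hx]
        exact (ρ x).symm_apply_apply s }
  intro g
  have hg : g ∈ H := by
    refine PresentedGroup.generated_by _ H ?_ g
    intro j
    fin_cases j
    · exact hfix.1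
    · exact hfix.2
  exact hg
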